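/- If g : [0,∞) → ℝ is a bounded measurable function with lim_{t→∞} g(t) = G, then the mean optimal centralised generation m_Q(t) := q₀·e^{−(K_f/δ)t} + (λ/δ)·∫₀^t e^{−(K_f/δ)(t−s)} (∫_s^∞ e^{−(ρ+K_f/δ)(u−s)} g(u) du) ds − ((π + hρ)/(2λ))·(1 − e^{−(K_f/δ)t}) converges as t → ∞ to G − (π + hρ)/(2λ); in particular the corresponding mean installation rate m_Q'(t) tends to zero. -/

import Mathlib

open MeasureTheory Filter Set


private lemma exp_int {a : ℝ} (ha : 0 < a) :
    ∫ v in Ioi (0:ℝ), Real.exp (-a * v) = 1 / a := by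
  have h := integral_comp_mul_left_Ioi (fun x => Real.exp (-x)) 0 ha
  simp only [mul_zero, integral_exp_neg_Ioi, neg_zero, Real.exp_zero, smul_eq_mul, mul_one,
    ← neg_mul] at h
  rw [h, one_div]

private lemma tail_rw (a s : ℝ) (g : ℝ → ℝ) :
    (∫ u in Ioi s, Real.exp (-a * (u - s)) * g u)
      = ∫ v in Ioi (0:ℝ), Real.exp (-a * v) * g (v + s) := by
  rw [← integral_indicator measurableSet_Ioi, ← integral_indicator measurableSet_Ioi,
    ← integral_add_right_eq_self
      (fun u => (Ioi s).indicator (fun u => Real.exp (-a * (u - s)) * g u) u) s]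
  congr 1; ext v
  by_cases hv : 0 < v
  · rw [indicator_of_mem (by simpa using hv : v + s ∈ Ioi s),
      indicator_of_mem (mem_Ioi.2 hv)]
    simp [add_sub_cancel_right]
  · rw [indicator_of_notMem (by simpa using hv), indicator_of_notMem (by simpa using hv)]

private lemma tail_tendsto {a : ℝ} (ha : 0 < a) {g : ℝ → ℝ} (hg : Measurable g)
    {M : ℝ} (hM : ∀ t, |g t| ≤ M) {G : ℝ} (hlim : Tendsto g atTop (nhds G)) :
    Tendsto (fun s => ∫ u in Ioi s, Real.exp (-a * (u - s)) * g u) atTop (nhds (G / a)) := by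
  have key : Tendsto (fun s => ∫ v in Ioi (0:ℝ), Real.exp (-a * v) * g (v + s)) atTop
      (nhds (∫ v in Ioi (0:ℝ), Real.exp (-a * v) * G)) := by
    apply tendsto_integral_filter_of_dominated_convergence (fun v => M * Real.exp (-a * v))
    · exact Eventually.of_forall fun s =>
        ((measurable_id.const_mul (-a)).exp.mul
          (hg.comp (measurable_id.add_const s))).aestronglyMeasurable
    · refine Eventually.of_forall fun s => Eventually.of_forall fun v => ?_
      rw [norm_mul, Real.norm_eq_abs, Real.norm_eq_abs, Real.abs_exp, mul_comm]
      exact mul_le_mul_of_nonneg_right (hM _) (Real.exp_pos _).le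
    · exact (exp_neg_integrableOn_Ioi 0 ha).const_mul M
    · refine Eventually.of_forall fun v => Tendsto.const_mul _ ?_
      exact hlim.comp (tendsto_atTop_add_const_left atTop v tendsto_id)
  have hval : (∫ v in Ioi (0:ℝ), Real.exp (-a * v) * G) = G / a := by
    rw [integral_mul_const, exp_int ha]; ring
  rw [hval] at key
  exact key.congr fun s => (tail_rw a s g).symm

private lemma conv_tendsto {k : ℝ} (hk : 0 < k) {F : ℝ → ℝ} (hF : Measurable F)
    {M : ℝ} (hM : ∀ t, |F t| ≤ M) {L : ℝ} (hlim : Tendsto F atTop (nhds L)) :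
    Tendsto (fun t => ∫ s in Ioc (0:ℝ) t, Real.exp (-k * (t - s)) * F s) atTop
      (nhds (L / k)) := by
  have hM0 : 0 ≤ M := (abs_nonneg _).trans (hM 0)
  have rw1 : ∀ t : ℝ, (∫ s in Ioc (0:ℝ) t, Real.exp (-k * (t - s)) * F s)
      = ∫ v, (Ico (0:ℝ) t).indicator (fun v => Real.exp (-k * v) * F (t - v)) v := by
    intro t
    rw [← integral_indicator measurableSet_Ioc,
      ← integral_sub_left_eq_self
        (fun s => (Ioc (0:ℝ) t).indicator (fun s => Real.exp (-k * (t - s)) * F s) s) volume t]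
    congr 1; ext v
    by_cases hv : v ∈ Ico (0:ℝ) t
    · have : t - v ∈ Ioc (0:ℝ) t := ⟨by simp [sub_pos, hv.2], by simp [hv.1]⟩
      rw [indicator_of_mem this, indicator_of_mem hv, sub_sub_cancel]
    · have : t - v ∉ Ioc (0:ℝ) t := by
        simp only [mem_Ico, not_and, not_lt] at hv
        simp only [mem_Ioc, sub_pos, sub_le_self_iff, not_and, not_le]
        intro h2
        by_contra h3
        exact absurd (hv (not_lt.mp h3)) (not_le.mpr h2)
      rw [indicator_of_notMem this, indicator_of_notMem hv]
  have key : Tendsto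
      (fun t => ∫ v, (Ico (0:ℝ) t).indicator (fun v => Real.exp (-k * v) * F (t - v)) v) atTop
      (nhds (∫ v, (Ioi (0:ℝ)).indicator (fun v => Real.exp (-k * v) * L) v)) := by
    apply tendsto_integral_filter_of_dominated_convergence
      (fun v => (Ici (0:ℝ)).indicator (fun v => M * Real.exp (-k * v)) v)
    · refine Eventually.of_forall fun t => Measurable.aestronglyMeasurable ?_
      exact ((measurable_id.const_mul (-k)).exp.mul
        (hF.comp (measurable_const.sub measurable_id))).indicator measurableSet_Ico
    · refine Eventually.of_forall fun t => Eventually.of_forall fun v => ?_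
      by_cases hv : v ∈ Ico (0:ℝ) t
      · rw [indicator_of_mem hv, indicator_of_mem (mem_Ici.2 hv.1), Real.norm_eq_abs, abs_mul,
          Real.abs_exp]
        exact le_trans (mul_le_mul_of_nonneg_left (hM _) (Real.exp_pos _).le)
          (le_of_eq (mul_comm _ _))
      · rw [indicator_of_notMem hv, norm_zero]
        exact indicator_nonneg (fun v _ => by positivity) v
    · rw [integrable_indicator_iff measurableSet_Ici]
      rw [IntegrableOn, Measure.restrict_congr_set Ioi_ae_eq_Ici.symm]
      exact (exp_neg_integrableOn_Ioi 0 hk).const_mul M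
    · have h0 : ∀ᵐ (v : ℝ), v ≠ 0 := by
        refine ae_iff.mpr ?_
        simp [not_not, setOf_eq_eq_singleton]
      filter_upwards [h0] with v hv
      rcases lt_or_gt_of_ne hv with hneg | hpos
      · have : ∀ t : ℝ, (Ico (0:ℝ) t).indicator (fun v => Real.exp (-k * v) * F (t - v)) v = 0 :=
          fun t => indicator_of_notMem (fun hc => absurd hc.1 (not_le.mpr hneg)) _
        simp only [this, indicator_of_notMem (notMem_Ioi.mpr hneg.le)]
        exact tendsto_const_nhds
      · rw [indicator_of_mem (mem_Ioi.mpr hpos)]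
        have h1 : Tendsto (fun t => Real.exp (-k * v) * F (t - v)) atTop
            (nhds (Real.exp (-k * v) * L)) :=
          Tendsto.const_mul _ (hlim.comp (tendsto_atTop_add_const_right atTop (-v) tendsto_id))
        refine h1.congr' ?_
        filter_upwards [eventually_gt_atTop v] with t ht
        rw [indicator_of_mem (mem_Ico.mpr ⟨hpos.le, ht⟩)]
  have hval : (∫ v, (Ioi (0:ℝ)).indicator (fun v => Real.exp (-k * v) * L) v) = L / k := by
    rw [integral_indicator measurableSet_Ioi, integral_mul_const, exp_int hk]; ring
  rw [hval] at key
  exact key.congr fun t => (rw1 t).symm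

private lemma tail_cont {a : ℝ} (ha : 0 < a) {g : ℝ → ℝ} (hg : Measurable g)
    {M : ℝ} (hM : ∀ t, |g t| ≤ M) :
    Continuous (fun s => ∫ u in Ioi s, Real.exp (-a * (u - s)) * g u) := by
  have hM0 : 0 ≤ M := (abs_nonneg _).trans (hM 0)
  have hφ : Measurable (fun u => Real.exp (-a * u) * g u) :=
    (measurable_id.const_mul (-a)).exp.mul hg
  have hH : Continuous (fun s => ∫ u in Ioi s, Real.exp (-a * u) * g u) := by
    rw [continuous_iff_continuousAt]
    intro s₀
    have key : Tendsto
        (fun s => ∫ u, (Ioi s).indicator (fun u => Real.exp (-a * u) * g u) u) (nhds s₀)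
        (nhds (∫ u, (Ioi s₀).indicator (fun u => Real.exp (-a * u) * g u) u)) := by
      apply tendsto_integral_filter_of_dominated_convergence
        (fun u => (Ioi (s₀ - 1)).indicator (fun u => M * Real.exp (-a * u)) u)
      · exact Eventually.of_forall fun s =>
          (hφ.indicator measurableSet_Ioi).aestronglyMeasurable
      · filter_upwards [Ioi_mem_nhds (show s₀ - 1 < s₀ by linarith)] with s hs
        refine Eventually.of_forall fun u => ?_
        by_cases hu : u ∈ Ioi s
        · rw [indicator_of_mem hu, indicator_of_mem (mem_Ioi.mpr (lt_trans hs hu)),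
            Real.norm_eq_abs, abs_mul, Real.abs_exp]
          exact le_trans (mul_le_mul_of_nonneg_left (hM _) (Real.exp_pos _).le)
            (le_of_eq (mul_comm _ _))
        · rw [indicator_of_notMem hu, norm_zero]
          exact indicator_nonneg (fun v _ => mul_nonneg hM0 (Real.exp_pos _).le) u
      · rw [integrable_indicator_iff measurableSet_Ioi]
        exact (exp_neg_integrableOn_Ioi _ ha).const_mul M
      · have h0 : ∀ᵐ (u : ℝ), u ≠ s₀ := ae_iff.mpr (by simp [not_not, setOf_eq_eq_singleton])
        filter_upwards [h0] with u hu
        rcases lt_or_gt_of_ne hu with h1 | h1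
        · rw [indicator_of_notMem (notMem_Ioi.mpr h1.le)]
          refine Tendsto.congr' ?_ tendsto_const_nhds
          filter_upwards [Ioi_mem_nhds h1] with s hs
          rw [indicator_of_notMem (notMem_Ioi.mpr (le_of_lt hs))]
        · rw [indicator_of_mem (mem_Ioi.mpr h1)]
          refine Tendsto.congr' ?_ tendsto_const_nhds
          filter_upwards [Iio_mem_nhds h1] with s hs
          rw [indicator_of_mem (mem_Ioi.mpr hs)]
    simpa only [ContinuousAt, integral_indicator measurableSet_Ioi] using key
  have hFeq : ∀ s, (∫ u in Ioi s, Real.exp (-a * (u - s)) * g u)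
      = Real.exp (a * s) * ∫ u in Ioi s, Real.exp (-a * u) * g u := by
    intro s
    rw [← integral_const_mul]
    congr 1; funext u
    rw [← mul_assoc, ← Real.exp_add]
    congr 2
    ring
  refine Continuous.congr ?_ (fun s => (hFeq s).symm)
  exact (Real.continuous_exp.comp (continuous_const.mul continuous_id)).mul hH

private lemma tail_bdd {a : ℝ} (ha : 0 < a) {g : ℝ → ℝ}
    {M : ℝ} (hM : ∀ t, |g t| ≤ M) (s : ℝ) :
    |∫ u in Ioi s, Real.exp (-a * (u - s)) * g u| ≤ M / a := by
  rw [tail_rw]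
  have hb : Integrable (fun v => M * Real.exp (-a * v)) (volume.restrict (Ioi (0:ℝ))) :=
    (exp_neg_integrableOn_Ioi 0 ha).const_mul M
  have hle : ‖∫ v in Ioi (0:ℝ), Real.exp (-a * v) * g (v + s)‖
      ≤ ∫ v in Ioi (0:ℝ), M * Real.exp (-a * v) := by
    refine norm_integral_le_of_norm_le hb (Eventually.of_forall fun v => ?_)
    rw [Real.norm_eq_abs, abs_mul, Real.abs_exp]
    exact le_trans (mul_le_mul_of_nonneg_left (hM _) (Real.exp_pos _).le)
      (le_of_eq (mul_comm _ _))
  rw [Real.norm_eq_abs] at hle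
  calc |∫ v in Ioi (0:ℝ), Real.exp (-a * v) * g (v + s)|
      ≤ ∫ v in Ioi (0:ℝ), M * Real.exp (-a * v) := hle
    _ = M / a := by rw [integral_const_mul, exp_int ha]; ring

/-- deterministic content of Proposition 3.2: if the expected
residual demand `g(t)` is bounded, measurable, and converges to `G`, then the
mean optimal centralised generation `m_Q(t)` converges to `G − (π + hρ)/(2λ)`,
and the mean installation rate `m_Q'(t)` tends to zero. -/
theorem stmt_8 (ρ δ lam : ℝ) (hρ : 0 < ρ) (hδ : 0 < δ) (hlam : 0 < lam)
    (π h q₀ : ℝ)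
    (Kf : ℝ) (hKf : Kf = (δ / 2) * (-ρ + Real.sqrt (ρ ^ 2 + 4 * lam / δ)))
    (g : ℝ → ℝ) (hg_meas : Measurable g) (hg_bdd : ∃ M : ℝ, ∀ t, |g t| ≤ M)
    (G : ℝ) (hg_lim : Tendsto g atTop (nhds G))
    (mQ : ℝ → ℝ)
    (hmQ : ∀ t : ℝ, mQ t =
      q₀ * Real.exp (-(Kf / δ) * t) +
      (lam / δ) *
        (∫ s in Set.Ioc (0 : ℝ) t, Real.exp (-(Kf / δ) * (t - s)) *
          ∫ u in Set.Ioi s, Real.exp (-(ρ + Kf / δ) * (u - s)) * g u) -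
      ((π + h * ρ) / (2 * lam)) * (1 - Real.exp (-(Kf / δ) * t))) :
    Tendsto mQ atTop (nhds (G - (π + h * ρ) / (2 * lam))) ∧
      Tendsto (fun t : ℝ => deriv mQ t) atTop (nhds 0) := by
  obtain ⟨M, hM⟩ := hg_bdd
  set k : ℝ := Kf / δ with hkdef
  have hs2 : Real.sqrt (ρ ^ 2 + 4 * lam / δ) ^ 2 = ρ ^ 2 + 4 * lam / δ :=
    Real.sq_sqrt (by positivity)
  have h4 : 0 < 4 * lam / δ := by positivity
  have hsgt : ρ < Real.sqrt (ρ ^ 2 + 4 * lam / δ) := by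
    nlinarith [Real.sqrt_nonneg (ρ ^ 2 + 4 * lam / δ), hs2, h4, hρ]
  have hKf0 : 0 < Kf := by
    rw [hKf]; apply mul_pos (by positivity); linarith
  have hk0 : 0 < k := div_pos hKf0 hδ
  have ha0 : 0 < ρ + k := by linarith
  have hka : k * (ρ + k) = lam / δ := by
    have hkval : k = (-ρ + Real.sqrt (ρ ^ 2 + 4 * lam / δ)) / 2 := by
      rw [hkdef, hKf]; field_simp
    have hring : (-ρ + Real.sqrt (ρ ^ 2 + 4 * lam / δ)) / 2 *
        (ρ + (-ρ + Real.sqrt (ρ ^ 2 + 4 * lam / δ)) / 2)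
        = (Real.sqrt (ρ ^ 2 + 4 * lam / δ) ^ 2 - ρ ^ 2) / 4 := by ring
    rw [hkval, hring, hs2]; ring
  set F : ℝ → ℝ := fun s => ∫ u in Set.Ioi s, Real.exp (-(ρ + k) * (u - s)) * g u with hFdef
  have hFc : Continuous F := tail_cont ha0 hg_meas hM
  have hFb : ∀ s, |F s| ≤ M / (ρ + k) := fun s => tail_bdd ha0 hM s
  have hFl : Tendsto F atTop (nhds (G / (ρ + k))) := tail_tendsto ha0 hg_meas hM hg_lim
  set L : ℝ := G / (ρ + k) with hL
  have hJ : Tendsto (fun t => ∫ s in Set.Ioc (0:ℝ) t, Real.exp (-k * (t - s)) * F s) atTop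
      (nhds (L / k)) := conv_tendsto hk0 hFc.measurable hFb hFl
  set C : ℝ := (π + h * ρ) / (2 * lam) with hC
  have hrw : ∀ t : ℝ, mQ t = q₀ * Real.exp (-k * t) +
      (lam / δ) * (∫ s in Set.Ioc (0:ℝ) t, Real.exp (-k * (t - s)) * F s) -
      C * (1 - Real.exp (-k * t)) := by
    intro t; rw [hmQ t]
  have texp : Tendsto (fun t : ℝ => Real.exp (-k * t)) atTop (nhds 0) :=
    Real.tendsto_exp_atBot.comp (tendsto_id.const_mul_atTop_of_neg (by linarith))
  constructor
  · have h1 : Tendsto mQ atTop (nhds (q₀ * 0 + (lam / δ) * (L / k) - C * (1 - 0))) := by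
      rw [funext hrw]
      exact ((texp.const_mul q₀).add (hJ.const_mul (lam / δ))).sub
        ((tendsto_const_nhds.sub texp).const_mul C)
    have hval : q₀ * 0 + (lam / δ) * (L / k) - C * (1 - 0) = G - C := by
      rw [hL, ← hka]; field_simp; ring
    rw [← hval]; exact h1
  · have hcontP : Continuous fun x => Real.exp (k * x) * F x :=
      (Real.continuous_exp.comp (continuous_const.mul continuous_id)).mul hFc
    set P : ℝ → ℝ := fun t => ∫ x in (0:ℝ)..t, Real.exp (k * x) * F x with hPdef
    have hPderiv : ∀ t, HasDerivAt P (Real.exp (k * t) * F t) t := fun t =>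
      (hcontP.integral_hasStrictDerivAt 0 t).hasDerivAt
    set mQ2 : ℝ → ℝ := fun t => q₀ * Real.exp (-k * t) +
      (lam / δ) * (Real.exp (-k * t) * P t) - C * (1 - Real.exp (-k * t)) with hmQ2def
    have heqconv : ∀ t : ℝ, 0 ≤ t →
        (∫ s in Set.Ioc (0:ℝ) t, Real.exp (-k * (t - s)) * F s) = Real.exp (-k * t) * P t := by
      intro t ht
      have hPt : P t = ∫ s in Set.Ioc (0:ℝ) t, Real.exp (k * s) * F s :=
        intervalIntegral.integral_of_le ht
      rw [hPt, ← integral_const_mul]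
      congr 1; funext s
      rw [← mul_assoc, ← Real.exp_add]
      congr 2
      ring
    have heq : ∀ t : ℝ, 0 ≤ t → mQ t = mQ2 t := by
      intro t ht
      rw [hrw t, heqconv t ht]
    have he : ∀ t : ℝ, HasDerivAt (fun t => Real.exp (-k * t)) (Real.exp (-k * t) * -k) t := by
      intro t
      simpa using ((hasDerivAt_id t).const_mul (-k)).exp
    have hmQ2deriv : ∀ t : ℝ, HasDerivAt mQ2
        (q₀ * (Real.exp (-k * t) * -k) +
          (lam / δ) * ((Real.exp (-k * t) * -k) * P t +
            Real.exp (-k * t) * (Real.exp (k * t) * F t)) -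
          C * (0 - Real.exp (-k * t) * -k)) t := by
      intro t
      exact (((he t).const_mul q₀).add (((he t).mul (hPderiv t)).const_mul (lam / δ))).sub
        (((hasDerivAt_const t (1:ℝ)).sub (he t)).const_mul C)
    have hEv : ∀ᶠ t in atTop, deriv mQ t =
        q₀ * (Real.exp (-k * t) * -k) +
          (lam / δ) * (-k * (∫ s in Set.Ioc (0:ℝ) t, Real.exp (-k * (t - s)) * F s) + F t) -
          C * (0 - Real.exp (-k * t) * -k) := by
      filter_upwards [eventually_gt_atTop (0:ℝ)] with t ht
      have hev : mQ =ᶠ[nhds t] mQ2 := by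
        filter_upwards [Ioi_mem_nhds ht] with u hu using heq u (le_of_lt hu)
      rw [hev.deriv_eq, (hmQ2deriv t).deriv, heqconv t ht.le]
      have hcancel : Real.exp (-k * t) * (Real.exp (k * t) * F t) = F t := by
        rw [← mul_assoc, ← Real.exp_add, show -k * t + k * t = 0 by ring, Real.exp_zero, one_mul]
      rw [hcancel]
      ring
    have hT : Tendsto (fun t : ℝ =>
        q₀ * (Real.exp (-k * t) * -k) +
          (lam / δ) * (-k * (∫ s in Set.Ioc (0:ℝ) t, Real.exp (-k * (t - s)) * F s) + F t) -
          C * (0 - Real.exp (-k * t) * -k)) atTop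
        (nhds (q₀ * (0 * -k) + (lam / δ) * (-k * (L / k) + L) - C * (0 - 0 * -k))) :=
      (((texp.mul tendsto_const_nhds).const_mul q₀).add
        (((hJ.const_mul (-k)).add hFl).const_mul (lam / δ))).sub
        ((tendsto_const_nhds.sub (texp.mul tendsto_const_nhds)).const_mul C)
    have hzero : q₀ * ((0:ℝ) * -k) + (lam / δ) * (-k * (L / k) + L) - C * (0 - 0 * -k) = 0 := by
      field_simp; ring
    rw [hzero] at hT
    exact hT.congr' (Filter.EventuallyEq.symm hEv)
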